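/- On any reflexive, transitive, strongly convergent frame with constant domain D and predicate P : D → W → Prop: for any d ∈ D and w ∈ W, if P(d) holds at every R_B-successor of w (i.e., [B]P(d) holds at w), then at every R_B-successor v of w, [B]P(d) holds at v. That is, the KD45 axiom [B]φ → [B][B]φ is valid for the derived belief modality. -/
import Mathlib

def RB {W : Type*} (R : W → W → Prop) (w u : W) : Prop := ∀ v, R w v → R v u

theorem B_pos_introspection {W : Type*} [Nonempty W] {D : Type*} [Nonempty D]
    (R : W → W → Prop) (P : D → W → Prop)
    (hrefl : ∀ w, R w w) (htrans : ∀ w v u, R w v → R v u → R w u)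
    (hconv : ∀ w, ∃ u, ∀ v, R w v → R v u)
    (d : D) (w : W) (h : ∀ u, RB R w u → P d u) :
    ∀ v, RB R w v → ∀ u, RB R v u → P d u := by
  intro v hv u hu
  exact h u (fun x hwx => htrans x v u (hv x hwx) (hu v (hrefl v)))
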